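/- The exponential generating function of the signed descent sums equals tanh: Σ_{n≥1} (φ(n)/n!) x^n = tanh(x) as formal power series over ℚ (equivalently, as an identity of real analytic functions near 0), where φ(n) = Σ_{σ ∈ S_n} (-1)^{d(σ)}. -/

import Mathlib

/-- The descent number of a list: the number of indices `i` with `l.get (i+1) < l.get i`. -/
def descList (l : List ℕ) : ℕ := (l.zip l.tail).countP fun p => decide (p.2 < p.1)

/-- The descent number of a permutation of `{1,…,n}`, read as the word `σ(1) … σ(n)`. -/
def permDesc {n : ℕ} (σ : Equiv.Perm (Fin n)) : ℕ :=
  descList ((List.finRange n).map fun i => ((σ i : Fin n) : ℕ))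

/-- The signed descent sum `φ(n) = Σ_{σ ∈ S_n} (-1)^{d(σ)}`. -/
def phi (n : ℕ) : ℤ := ∑ σ : Equiv.Perm (Fin n), (-1) ^ permDesc σ
/-- The formal power series of `cosh` over `ℚ`. -/
noncomputable def coshQ : PowerSeries ℚ :=
  PowerSeries.mk fun n => if Even n then 1 / n.factorial else 0

/-- The formal power series of `sinh` over `ℚ`. -/
noncomputable def sinhQ : PowerSeries ℚ :=
  PowerSeries.mk fun n => if Odd n then 1 / n.factorial else 0

/-- The formal power series of `tanh` over `ℚ`. -/
noncomputable def tanhQ : PowerSeries ℚ := sinhQ * coshQ⁻¹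



lemma descList_nil : descList [] = 0 := rfl
lemma descList_singleton (a : ℕ) : descList [a] = 0 := rfl

lemma descList_cons₂ (a b : ℕ) (l : List ℕ) :
    descList (a :: b :: l) = (if b < a then 1 else 0) + descList (b :: l) := by
  simp [descList, List.countP_cons]
  split <;> simp [Nat.add_comm]

lemma descList_map_congr {α : Type*} (l : List α) (f g : α → ℕ)
    (h : ∀ a ∈ l, ∀ b ∈ l, (f a < f b ↔ g a < g b)) :
    descList (l.map f) = descList (l.map g) := by
  induction l with
  | nil => rfl
  | cons a rest ih =>
    cases rest with
    | nil => rfl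
    | cons b t =>
      have h1 : descList (List.map f (a :: b :: t)) =
          (if f b < f a then 1 else 0) + descList (List.map f (b :: t)) := by
        simpa using descList_cons₂ (f a) (f b) (t.map f)
      have h2 : descList (List.map g (a :: b :: t)) =
          (if g b < g a then 1 else 0) + descList (List.map g (b :: t)) := by
        simpa using descList_cons₂ (g a) (g b) (t.map g)
      rw [h1, h2, ih (fun x hx y hy => h x (List.mem_cons_of_mem _ hx) y (List.mem_cons_of_mem _ hy))]
      congr 1
      simp [h b (by simp) a (by simp)]

lemma descList_append (A B : List ℕ) (x : ℕ) (hA : ∀ a ∈ A, a < x) (hB : ∀ b ∈ B, b < x) :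
    descList (A ++ x :: B) = descList A + descList B + (if B.isEmpty then 0 else 1) := by
  induction A with
  | nil =>
    cases B with
    | nil => simp [descList]
    | cons b t =>
      simp only [List.nil_append, descList_nil, List.isEmpty_cons]
      rw [descList_cons₂]
      have : b < x := hB b (by simp)
      simp [this, Nat.add_comm]
  | cons a A' ih =>
    have ih' := ih (fun y hy => hA y (List.mem_cons_of_mem _ hy))
    cases A' with
    | nil =>
      simp only [List.cons_append, List.nil_append]
      rw [descList_cons₂]
      have : ¬ x < a := by have := hA a (by simp); omega
      simp only [List.nil_append] at ih'
      rw [ih']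
      simp [this, descList_singleton, descList_nil]
    | cons a' t =>
      simp only [List.cons_append] at ih' ⊢
      rw [descList_cons₂, ih', descList_cons₂]
      ring

def wDesc (m : ℕ) (f : Fin m → ℕ) : ℕ := descList ((List.finRange m).map f)

lemma permDesc_eq_wDesc {n : ℕ} (σ : Equiv.Perm (Fin n)) :
    permDesc σ = wDesc n (fun i => (σ i : ℕ)) := rfl

lemma wDesc_congr {m : ℕ} (f g : Fin m → ℕ) (h : ∀ i j, f i < f j ↔ g i < g j) :
    wDesc m f = wDesc m g :=
  descList_map_congr _ f g (fun a _ b _ => h a b)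

/-- the permutation built from a `p`-subset `S` and two small permutations. -/
noncomputable def mixPerm {n p q : ℕ} (e : (Fin p ⊕ Fin q) ≃ Fin n) (S : Finset (Fin n))
    (hS : S.card = p) (hSc : Sᶜ.card = q)
    (τ : Equiv.Perm (Fin p)) (υ : Equiv.Perm (Fin q)) : Equiv.Perm (Fin n) :=
  ((e.symm.trans (Equiv.sumCongr τ υ)).trans
    (Equiv.sumCongr (S.orderIsoOfFin hS).toEquiv
      ((Sᶜ.orderIsoOfFin hSc).toEquiv.trans
        (Equiv.subtypeEquivRight (fun x => Finset.mem_compl))))).trans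
    (Equiv.sumCompl (· ∈ S))

lemma mixPerm_inl {n p q : ℕ} (e : (Fin p ⊕ Fin q) ≃ Fin n) (S : Finset (Fin n))
    (hS : S.card = p) (hSc : Sᶜ.card = q) (τ : Equiv.Perm (Fin p)) (υ : Equiv.Perm (Fin q))
    (i : Fin p) :
    mixPerm e S hS hSc τ υ (e (Sum.inl i)) = (S.orderIsoOfFin hS (τ i) : Fin n) := by
  simp [mixPerm]

lemma mixPerm_inr {n p q : ℕ} (e : (Fin p ⊕ Fin q) ≃ Fin n) (S : Finset (Fin n))
    (hS : S.card = p) (hSc : Sᶜ.card = q) (τ : Equiv.Perm (Fin p)) (υ : Equiv.Perm (Fin q))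
    (j : Fin q) :
    mixPerm e S hS hSc τ υ (e (Sum.inr j)) = (Sᶜ.orderIsoOfFin hSc (υ j) : Fin n) := by
  simp [mixPerm]

lemma sum_perm_split (p q n : ℕ) (e : (Fin p ⊕ Fin q) ≃ Fin n) :
    (∑ ρ : Equiv.Perm (Fin n),
      ((-1:ℤ) ^ wDesc p fun i => ((ρ (e (Sum.inl i)) : Fin n) : ℕ)) *
      ((-1:ℤ) ^ wDesc q fun j => ((ρ (e (Sum.inr j)) : Fin n) : ℕ)))
      = (n.choose p) * phi p * phi q := by
  have hn : p + q = n := by simpa using Fintype.card_congr e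
  have hp : p ≤ n := by omega
  have hSc : ∀ S : Finset (Fin n), S.card = p → Sᶜ.card = q := by
    intro S hS
    rw [Finset.card_compl, hS]; simp; omega
  let I := {S : Finset (Fin n) // S.card = p} × Equiv.Perm (Fin p) × Equiv.Perm (Fin q)
  let θ : I → Equiv.Perm (Fin n) := fun x => mixPerm e x.1.1 x.1.2 (hSc _ x.1.2) x.2.1 x.2.2
  have hinj : Function.Injective θ := by
    rintro ⟨⟨S, hS⟩, τ, υ⟩ ⟨⟨S', hS'⟩, τ', υ'⟩ hEq
    simp only [θ] at hEq
    have happ : ∀ z, mixPerm e S hS (hSc _ hS) τ υ z = mixPerm e S' hS' (hSc _ hS') τ' υ' z :=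
      fun z => congrArg (fun π : Equiv.Perm (Fin n) => π z) hEq
    have hSS : S = S' := by
      ext z
      constructor
      · intro hz
        have h1 : mixPerm e S hS (hSc _ hS) τ υ (e (Sum.inl (τ.symm ((S.orderIsoOfFin hS).symm ⟨z, hz⟩)))) = z := by
          rw [mixPerm_inl]; simp
        rw [happ, mixPerm_inl] at h1
        rw [← h1]
        exact Finset.coe_mem _
      · intro hz
        have h1 : mixPerm e S' hS' (hSc _ hS') τ' υ' (e (Sum.inl (τ'.symm ((S'.orderIsoOfFin hS').symm ⟨z, hz⟩)))) = z := by
          rw [mixPerm_inl]; simp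
        rw [← happ, mixPerm_inl] at h1
        rw [← h1]
        exact Finset.coe_mem _
    subst hSS
    have hττ : τ = τ' := by
      apply Equiv.ext; intro i
      have := happ (e (Sum.inl i))
      rw [mixPerm_inl, mixPerm_inl] at this
      have h2 : (S.orderIsoOfFin hS) (τ i) = (S.orderIsoOfFin hS) (τ' i) := Subtype.ext this
      exact (S.orderIsoOfFin hS).injective h2
    have hυυ : υ = υ' := by
      apply Equiv.ext; intro j
      have := happ (e (Sum.inr j))
      rw [mixPerm_inr, mixPerm_inr] at this
      have h2 : (Sᶜ.orderIsoOfFin (hSc _ hS)) (υ j) = (Sᶜ.orderIsoOfFin (hSc _ hS)) (υ' j) := Subtype.ext this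
      exact (Sᶜ.orderIsoOfFin (hSc _ hS)).injective h2
    simp [hττ, hυυ]
  have hcard : Fintype.card I = Fintype.card (Equiv.Perm (Fin n)) := by
    have hq : q = n - p := by omega
    simp only [I, Fintype.card_prod, Fintype.card_finset_len, Fintype.card_perm,
      Fintype.card_fin]
    subst hq
    rw [← Nat.choose_mul_factorial_mul_factorial hp]
    ring
  have hbij : Function.Bijective θ :=
    (Fintype.bijective_iff_injective_and_card θ).2 ⟨hinj, hcard⟩
  rw [← Fintype.sum_bijective θ hbij
    (fun x : I => ((-1:ℤ) ^ permDesc x.2.1) * ((-1:ℤ) ^ permDesc x.2.2)) _ ?_]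
  · rw [Fintype.sum_prod_type]
    have hconst : ∀ S : {S : Finset (Fin n) // S.card = p},
        (∑ x : Equiv.Perm (Fin p) × Equiv.Perm (Fin q),
          ((-1:ℤ) ^ permDesc x.1) * ((-1:ℤ) ^ permDesc x.2)) = phi p * phi q := by
      intro S
      rw [Fintype.sum_prod_type, phi, phi, Finset.sum_mul_sum]
    calc (∑ S : {S : Finset (Fin n) // S.card = p}, ∑ x : Equiv.Perm (Fin p) × Equiv.Perm (Fin q),
          ((-1:ℤ) ^ permDesc x.1) * ((-1:ℤ) ^ permDesc x.2))
        = ∑ _S : {S : Finset (Fin n) // S.card = p}, (phi p * phi q) :=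
          Finset.sum_congr rfl (fun S _ => hconst S)
      _ = (Fintype.card {S : Finset (Fin n) // S.card = p} : ℤ) * (phi p * phi q) := by
          rw [Finset.sum_const, Finset.card_univ, nsmul_eq_mul]
      _ = (n.choose p) * phi p * phi q := by
          rw [Fintype.card_finset_len, Fintype.card_fin]; ring
  · rintro ⟨⟨S, hS⟩, τ, υ⟩
    simp only [θ]
    have hwL : wDesc p (fun i => ((mixPerm e S hS (hSc _ hS) τ υ (e (Sum.inl i)) : Fin n) : ℕ))
        = permDesc τ := by
      rw [permDesc_eq_wDesc]
      apply wDesc_congr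
      intro i j
      rw [mixPerm_inl, mixPerm_inl]
      simp only [Fin.val_fin_lt, Subtype.coe_lt_coe, OrderIso.lt_iff_lt]
    have hwR : wDesc q (fun j => ((mixPerm e S hS (hSc _ hS) τ υ (e (Sum.inr j)) : Fin n) : ℕ))
        = permDesc υ := by
      rw [permDesc_eq_wDesc]
      apply wDesc_congr
      intro i j
      rw [mixPerm_inr, mixPerm_inr]
      simp only [Fin.val_fin_lt, Subtype.coe_lt_coe, OrderIso.lt_iff_lt]
    rw [hwL, hwR]

lemma ofFn_cast {m m' : ℕ} {α : Type*} (h : m' = m) (f : Fin m → α) :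
    List.ofFn f = List.ofFn (f ∘ Fin.cast h) := by subst h; rfl

/-- insert the maximum at position `p` -/
def insPerm {n : ℕ} (p : Fin (n+1)) (ρ : Equiv.Perm (Fin n)) : Equiv.Perm (Fin (n+1)) :=
  (finSuccEquiv' p).trans ((Equiv.optionCongr ρ).trans (finSuccEquiv' (Fin.last n)).symm)

lemma insPerm_at {n : ℕ} (p : Fin (n+1)) (ρ : Equiv.Perm (Fin n)) :
    insPerm p ρ p = Fin.last n := by
  simp [insPerm, finSuccEquiv'_at, finSuccEquiv'_symm_none]

lemma insPerm_succAbove {n : ℕ} (p : Fin (n+1)) (ρ : Equiv.Perm (Fin n)) (k : Fin n) :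
    insPerm p ρ (p.succAbove k) = (ρ k).castSucc := by
  simp [insPerm, finSuccEquiv'_succAbove, finSuccEquiv'_symm_some, Fin.succAbove_last]

lemma permDesc_insPerm {n : ℕ} (p : Fin (n+1)) (ρ : Equiv.Perm (Fin n)) :
    permDesc (insPerm p ρ) =
      wDesc (p:ℕ) (fun i => (ρ ⟨i.val, Nat.lt_of_lt_of_le i.isLt p.is_le⟩ : ℕ)) +
      wDesc (n - (p:ℕ)) (fun j => (ρ ⟨(p:ℕ) + j.val, by have := j.isLt; omega⟩ : ℕ)) +
      (if (p:ℕ) < n then 1 else 0) := by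
  have hp : (p:ℕ) ≤ n := p.is_le
  have hsplit : (p:ℕ) + ((n - (p:ℕ)) + 1) = n + 1 := by omega
  set fL : Fin (p:ℕ) → ℕ := fun i => (ρ ⟨i.val, Nat.lt_of_lt_of_le i.isLt p.is_le⟩ : ℕ) with hfL
  set fR : Fin (n - (p:ℕ)) → ℕ := fun j => (ρ ⟨(p:ℕ) + j.val, by have := j.isLt; omega⟩ : ℕ) with hfR
  have hword : (List.finRange (n+1)).map (fun i => ((insPerm p ρ) i : ℕ)) =
      (List.ofFn fL) ++ (n : ℕ) :: (List.ofFn fR) := by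
    rw [← List.ofFn_eq_map, ofFn_cast hsplit, List.ofFn_add, List.ofFn_succ]
    congr 1
    · refine congrArg List.ofFn (funext fun i => ?_)
      have hi : i.val < n := Nat.lt_of_lt_of_le i.isLt hp
      have hidx : Fin.cast hsplit (Fin.castLE (Nat.le_add_right _ _) i) = p.succAbove ⟨i.val, hi⟩ := by
        rw [Fin.succAbove_of_castSucc_lt]
        · apply Fin.ext; simp
        · rw [Fin.lt_def]; simpa using i.isLt
      simp only [Function.comp_apply, hidx, insPerm_succAbove, Fin.coe_castSucc]
      rfl
    · congr 1
      · have hidx : Fin.cast hsplit (Fin.natAdd (p:ℕ) (0 : Fin (n - (p:ℕ) + 1))) = p := by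
          apply Fin.ext; simp
        simp only [Function.comp_apply, hidx, insPerm_at, Fin.val_last]
      · refine congrArg List.ofFn (funext fun j => ?_)
        have hj : (p:ℕ) + j.val < n := by have := j.isLt; omega
        have hidx : Fin.cast hsplit (Fin.natAdd (p:ℕ) (Fin.succ j)) = p.succAbove ⟨(p:ℕ) + j.val, hj⟩ := by
          rw [Fin.succAbove_of_le_castSucc]
          · apply Fin.ext; simp [Nat.add_comm, Nat.add_assoc]
          · rw [Fin.le_def]; simp
        simp only [Function.comp_apply, hidx, insPerm_succAbove, Fin.coe_castSucc]
        rfl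
  rw [permDesc, hword, descList_append]
  · have hA : descList (List.ofFn fL) = wDesc (p:ℕ) fL := by
      rw [wDesc, ← List.ofFn_eq_map]
    have hB : descList (List.ofFn fR) = wDesc (n - (p:ℕ)) fR := by
      rw [wDesc, ← List.ofFn_eq_map]
    rw [hA, hB]
    congr 1
    have hlen : (List.ofFn fR).length = n - (p:ℕ) := List.length_ofFn
    by_cases hlt : (p:ℕ) < n
    · have hne : (List.ofFn fR) ≠ [] := by
        intro h; rw [h] at hlen; simp at hlen; omega
      simp [List.isEmpty_iff, hne, hlt]
    · have hq : (List.ofFn fR) = [] := by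
        apply List.eq_nil_of_length_eq_zero; omega
      simp [List.isEmpty_iff, hq, hlt]
  · intro a ha
    simp only [List.mem_ofFn] at ha
    obtain ⟨i, rfl⟩ := ha
    exact (ρ _).isLt
  · intro b hb
    simp only [List.mem_ofFn] at hb
    obtain ⟨j, rfl⟩ := hb
    exact (ρ _).isLt

lemma insPerm_bijective (n : ℕ) :
    Function.Bijective (fun x : Fin (n+1) × Equiv.Perm (Fin n) => insPerm x.1 x.2) := by
  apply (Fintype.bijective_iff_injective_and_card _).2
  constructor
  · rintro ⟨p, ρ⟩ ⟨p', ρ'⟩ hEq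
    simp only at hEq
    have happ : ∀ z, insPerm p ρ z = insPerm p' ρ' z :=
      fun z => congrArg (fun π : Equiv.Perm (Fin (n+1)) => π z) hEq
    have hpp : p = p' := by
      by_contra hne
      obtain ⟨k, hk⟩ := Fin.exists_succAbove_eq hne
      have h1 := happ p
      rw [insPerm_at, ← hk, insPerm_succAbove] at h1
      exact absurd h1.symm (Fin.castSucc_lt_last (ρ' k)).ne
    subst hpp
    have hρρ : ρ = ρ' := by
      apply Equiv.ext; intro k
      have h1 := happ (p.succAbove k)
      rw [insPerm_succAbove, insPerm_succAbove] at h1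
      exact Fin.castSucc_injective _ h1
    rw [hρρ]
  · simp [Fintype.card_perm, Nat.factorial_succ]

lemma phi_zero : phi 0 = 1 := by
  rw [phi, Fintype.sum_subsingleton _ (1 : Equiv.Perm (Fin 0))]
  rfl

lemma phi_succ (n : ℕ) :
    phi (n+1) = 2 * phi n - ∑ p ∈ Finset.range (n+1), (n.choose p : ℤ) * phi p * phi (n-p) := by
  have h1 : phi (n+1) = ∑ x : Fin (n+1) × Equiv.Perm (Fin n),
      (-1:ℤ) ^ permDesc (insPerm x.1 x.2) :=
    (Fintype.sum_bijective _ (insPerm_bijective n)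
      (fun x : Fin (n+1) × Equiv.Perm (Fin n) => (-1:ℤ) ^ permDesc (insPerm x.1 x.2))
      (fun σ => (-1:ℤ) ^ permDesc σ) (fun x => rfl)).symm
  rw [h1, Fintype.sum_prod_type]
  have h2 : ∀ p : Fin (n+1),
      (∑ ρ : Equiv.Perm (Fin n), (-1:ℤ) ^ permDesc (insPerm p ρ)) =
      (if (p:ℕ) < n then -1 else 1) * ((n.choose (p:ℕ) : ℤ) * phi (p:ℕ) * phi (n - (p:ℕ))) := by
    intro p
    have hp : (p:ℕ) ≤ n := p.is_le
    have hpq : (p:ℕ) + (n - (p:ℕ)) = n := by omega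
    set e : (Fin (p:ℕ) ⊕ Fin (n - (p:ℕ))) ≃ Fin n := finSumFinEquiv.trans (finCongr hpq) with he
    have key := sum_perm_split (p:ℕ) (n - (p:ℕ)) n e
    have hmatch : ∀ ρ : Equiv.Perm (Fin n),
        (-1:ℤ) ^ permDesc (insPerm p ρ) =
        (if (p:ℕ) < n then -1 else 1) *
        (((-1:ℤ) ^ wDesc (p:ℕ) fun i => ((ρ (e (Sum.inl i)) : Fin n) : ℕ)) *
         ((-1:ℤ) ^ wDesc (n - (p:ℕ)) fun j => ((ρ (e (Sum.inr j)) : Fin n) : ℕ))) := by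
      intro ρ
      rw [permDesc_insPerm]
      have heL : (fun i => ((ρ (e (Sum.inl i)) : Fin n) : ℕ)) =
          (fun i : Fin (p:ℕ) => (ρ ⟨i.val, Nat.lt_of_lt_of_le i.isLt p.is_le⟩ : ℕ)) := by
        funext i
        have hei : e (Sum.inl i) = (⟨i.val, Nat.lt_of_lt_of_le i.isLt p.is_le⟩ : Fin n) := by
          apply Fin.ext; simp [he]
        rw [hei]
      have heR : (fun j => ((ρ (e (Sum.inr j)) : Fin n) : ℕ)) =
          (fun j : Fin (n - (p:ℕ)) => (ρ ⟨(p:ℕ) + j.val, by have := j.isLt; omega⟩ : ℕ)) := by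
        funext j
        have hej : e (Sum.inr j) = (⟨(p:ℕ) + j.val, by have := j.isLt; omega⟩ : Fin n) := by
          apply Fin.ext; simp [he]
        rw [hej]
      rw [heL, heR, pow_add, pow_add]
      by_cases hlt : (p:ℕ) < n <;> simp [hlt] <;> ring
    rw [Finset.sum_congr rfl (fun ρ _ => hmatch ρ), ← Finset.mul_sum, key]
  rw [Finset.sum_congr rfl (fun p _ => h2 p)]
  have h3 : (∑ p : Fin (n+1), (if (p:ℕ) < n then (-1:ℤ) else 1) *
      ((n.choose (p:ℕ) : ℤ) * phi (p:ℕ) * phi (n - (p:ℕ)))) =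
      ∑ p ∈ Finset.range (n+1), (if p < n then (-1:ℤ) else 1) *
        ((n.choose p : ℤ) * phi p * phi (n - p)) :=
    Fin.sum_univ_eq_sum_range (fun p => (if p < n then (-1:ℤ) else 1) *
      ((n.choose p : ℤ) * phi p * phi (n - p))) (n+1)
  rw [h3, Finset.sum_range_succ]
  have h4 : ∀ p ∈ Finset.range n, (if p < n then (-1:ℤ) else 1) *
      ((n.choose p : ℤ) * phi p * phi (n - p)) =
      -((n.choose p : ℤ) * phi p * phi (n - p)) := by
    intro p hp
    rw [Finset.mem_range] at hp
    simp [hp]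
  rw [Finset.sum_congr rfl h4, Finset.sum_neg_distrib]
  rw [Finset.sum_range_succ (fun p => (n.choose p : ℤ) * phi p * phi (n - p)) n]
  simp [phi_zero]
  ring

open PowerSeries

lemma constantCoeff_coshQ : constantCoeff coshQ = 1 := by
  rw [← coeff_zero_eq_constantCoeff_apply]; simp [coshQ]

lemma constantCoeff_sinhQ : constantCoeff sinhQ = 0 := by
  rw [← coeff_zero_eq_constantCoeff_apply]; simp [sinhQ]

lemma coshQ_ne_zero : coshQ ≠ 0 := fun h => by
  have := constantCoeff_coshQ; rw [h] at this; simp at this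

lemma coshQ_add_sinhQ : coshQ + sinhQ = exp ℚ := by
  ext n
  rw [map_add, coeff_exp]
  simp only [coshQ, sinhQ, coeff_mk]
  rcases Nat.even_or_odd n with h | h
  · rw [if_pos h, if_neg (by simpa using h)]; simp
  · rw [if_neg (by simpa using h), if_pos h]; simp

lemma coshQ_sub_sinhQ : coshQ - sinhQ = evalNegHom (exp ℚ) := by
  ext n
  rw [map_sub]
  have : (evalNegHom (exp ℚ) : PowerSeries ℚ) = rescale (-1 : ℚ) (exp ℚ) := rfl
  rw [this, coeff_rescale, coeff_exp]
  simp only [coshQ, sinhQ, coeff_mk]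
  rcases Nat.even_or_odd n with h | h
  · rw [if_pos h, if_neg (by simpa using h), h.neg_one_pow]; simp
  · rw [if_neg (by simpa using h), if_pos h, h.neg_one_pow]; simp

lemma cosh_sq_sub_sinh_sq : coshQ * coshQ - sinhQ * sinhQ = 1 := by
  have h : (coshQ + sinhQ) * (coshQ - sinhQ) = 1 := by
    rw [coshQ_add_sinhQ, coshQ_sub_sinhQ, exp_mul_exp_neg_eq_one]
  calc coshQ * coshQ - sinhQ * sinhQ = (coshQ + sinhQ) * (coshQ - sinhQ) := by ring
    _ = 1 := h

lemma tanhQ_mul_coshQ : tanhQ * coshQ = sinhQ := by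
  rw [tanhQ, mul_assoc, PowerSeries.inv_mul_cancel _ (by rw [constantCoeff_coshQ]; norm_num),
    mul_one]

lemma derivFun_sinhQ : derivativeFun sinhQ = coshQ := by
  ext n
  change coeff n (derivative ℚ sinhQ) = _
  rw [coeff_derivative]
  simp only [sinhQ, coshQ, coeff_mk]
  rcases Nat.even_or_odd n with h | h
  · rw [if_pos (by simpa [Nat.odd_add_one] using h), if_pos h, Nat.factorial_succ]
    push_cast
    rw [div_mul_eq_mul_div]
    rw [mul_comm ((n:ℚ)+1) (n.factorial : ℚ)]
    field_simp
  · rw [if_neg (by simp [Nat.odd_add_one, h]), if_neg (by simpa using h)]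
    simp
lemma derivFun_coshQ : derivativeFun coshQ = sinhQ := by
  ext n
  change coeff n (derivative ℚ coshQ) = _
  rw [coeff_derivative]
  simp only [sinhQ, coshQ, coeff_mk]
  rcases Nat.even_or_odd n with h | h
  · rw [if_neg (by simp [Nat.even_add_one]; exact h), if_neg (by simpa using h)]
    simp
  · rw [if_pos (by simp [Nat.even_add_one]; simpa using h), if_pos h, Nat.factorial_succ]
    push_cast
    rw [div_mul_eq_mul_div, mul_comm ((n:ℚ)+1) (n.factorial : ℚ)]
    field_simp

lemma derivFun_tanhQ : derivativeFun tanhQ = 1 - tanhQ * tanhQ := by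
  have h1 : derivativeFun (tanhQ * coshQ) = derivativeFun sinhQ := by rw [tanhQ_mul_coshQ]
  rw [derivativeFun_mul, derivFun_sinhQ, derivFun_coshQ] at h1
  -- h1 : tanhQ • sinhQ + coshQ • derivativeFun tanhQ = coshQ
  have h2 : coshQ * derivativeFun tanhQ = coshQ - tanhQ * sinhQ := by
    rw [smul_eq_mul, smul_eq_mul] at h1
    linear_combination h1
  have h3 : coshQ * (1 - tanhQ * tanhQ) = coshQ - tanhQ * sinhQ := by
    have : tanhQ * (tanhQ * coshQ) = tanhQ * sinhQ := by rw [tanhQ_mul_coshQ]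
    linear_combination -this
  have := h2.trans h3.symm
  exact mul_left_cancel₀ coshQ_ne_zero this

noncomputable def Mseries : PowerSeries ℚ := PowerSeries.mk fun n => (phi n : ℚ) / n.factorial

lemma ode_unique (X Y : PowerSeries ℚ)
    (h0 : coeff 0 X = coeff 0 Y)
    (hX : ∀ n, coeff (n+1) X * ((n:ℚ)+1) = 2 * coeff n X - coeff n (X*X))
    (hY : ∀ n, coeff (n+1) Y * ((n:ℚ)+1) = 2 * coeff n Y - coeff n (Y*Y)) : X = Y := by
  have key : ∀ n, coeff n X = coeff n Y := by
    intro n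
    induction n using Nat.strong_induction_on with
    | _ n ih =>
      match n with
      | 0 => exact h0
      | (m+1) =>
        have hm : coeff m (X*X) = coeff m (Y*Y) := by
          rw [coeff_mul, coeff_mul]
          apply Finset.sum_congr rfl
          intro ij hij
          rw [Finset.HasAntidiagonal.mem_antidiagonal] at hij
          rw [ih ij.1 (by omega), ih ij.2 (by omega)]
        have h1 := hX m
        have h2 := hY m
        rw [ih m (by omega), hm] at h1
        have h3 := h1.trans h2.symm
        have hne : ((m:ℚ)+1) ≠ 0 := by positivity
        exact mul_right_cancel₀ hne h3
  ext n
  exact key n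

lemma hM_ode : ∀ n, coeff (n+1) Mseries * ((n:ℚ)+1) =
    2 * coeff n Mseries - coeff n (Mseries*Mseries) := by
  intro n
  have hfac : ∀ m : ℕ, ((m.factorial : ℚ)) ≠ 0 := fun m => Nat.cast_ne_zero.2 m.factorial_ne_zero
  rw [coeff_mul]
  simp only [Mseries, coeff_mk]
  rw [Finset.Nat.sum_antidiagonal_eq_sum_range_succ_mk]
  have hphi : (phi (n+1) : ℚ) = 2 * (phi n : ℚ) -
      ∑ p ∈ Finset.range (n+1), (n.choose p : ℚ) * (phi p : ℚ) * (phi (n-p) : ℚ) := by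
    have h := phi_succ n
    have h2 : ((phi (n+1) : ℤ) : ℚ) = ((2 * phi n - ∑ p ∈ Finset.range (n+1),
        (n.choose p : ℤ) * phi p * phi (n-p) : ℤ) : ℚ) := congrArg (fun z : ℤ => (z : ℚ)) h
    push_cast at h2
    exact h2
  have hterm : ∀ k ∈ Finset.range (n+1),
      ((phi k : ℚ)/k.factorial) * ((phi (n-k) : ℚ)/(n-k).factorial) =
      (n.choose k : ℚ) * (phi k : ℚ) * (phi (n-k) : ℚ) / n.factorial := by
    intro k hk
    rw [Finset.mem_range] at hk
    have hkn : k ≤ n := by omega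
    rw [Nat.cast_choose ℚ hkn]
    field_simp
  rw [Finset.sum_congr rfl hterm, ← Finset.sum_div, Nat.factorial_succ]
  push_cast
  rw [hphi]
  field_simp

lemma constantCoeff_tanhQ : constantCoeff tanhQ = 0 := by
  rw [tanhQ, map_mul, constantCoeff_sinhQ, zero_mul]

lemma hT_ode : ∀ n, coeff (n+1) (1 + tanhQ) * ((n:ℚ)+1) =
    2 * coeff n (1 + tanhQ) - coeff n ((1+tanhQ)*(1+tanhQ)) := by
  intro n
  have e1 : (1+tanhQ)*(1+tanhQ) = 1 + tanhQ + tanhQ + tanhQ * tanhQ := by ring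
  have hderiv : coeff (n+1) tanhQ * ((n:ℚ)+1) = coeff n (1 - tanhQ*tanhQ) := by
    rw [← derivFun_tanhQ]; exact (coeff_derivative tanhQ n).symm
  have h1 : coeff (n+1) (1 : PowerSeries ℚ) = 0 := by
    rw [coeff_one]; simp
  rw [e1]
  simp only [map_add, map_sub] at hderiv ⊢
  rw [h1]
  linear_combination hderiv

/-- the exponential generating function of the signed descent sums equals
`tanh`: `Σ_{n≥1} (φ(n)/n!) xⁿ = tanh(x)` as formal power series over `ℚ`. -/
theorem egf_phi_eq_tanh :
    PowerSeries.mk (fun n => if n = 0 then 0 else (phi n : ℚ) / n.factorial) = tanhQ := by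
  have h0 : coeff 0 Mseries = coeff 0 (1 + tanhQ) := by
    rw [map_add]
    simp [Mseries, phi_zero, coeff_zero_eq_constantCoeff, constantCoeff_tanhQ]
  have hMT : Mseries = 1 + tanhQ := ode_unique _ _ h0 hM_ode hT_ode
  ext n
  rw [coeff_mk]
  match n with
  | 0 =>
    rw [if_pos rfl, coeff_zero_eq_constantCoeff, constantCoeff_tanhQ]
  | (m+1) =>
    rw [if_neg (by omega)]
    have := congrArg (fun f => coeff (m+1) f) hMT
    simp only [Mseries, coeff_mk, map_add] at this
    rw [this]
    have h1 : coeff (m+1) (1 : PowerSeries ℚ) = 0 := by rw [coeff_one]; simp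
    rw [h1, zero_add]
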